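/- The infimum over a ∈ (1/4, 1] of h₂(a) = (1 - (3·arccos((4a-1)/3))/(2π))/a lies in the closed interval [0.795970, 0.796170]. -/

import Mathlib

open Real Set

/-- `h₂(a) = (1 - 3·arccos((4a-1)/3)/(2π))/a`. -/
noncomputable def h₂ (a : ℝ) : ℝ :=
  (1 - (3 * Real.arccos ((4 * a - 1) / 3)) / (2 * Real.pi)) / a

lemma quartic_core (s : ℝ) (hs1 : -0.25 ≤ s) (hs2 : s ≤ 0.05) :
    3e-5 ≤ 3.1415925*(2 - 0.79597 - (3*0.79597/2)*(1 - s^2/2 + s^4*(5/96))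
      + (3*0.79597*1.73205085/2)*(s - s^3/6 - s^4*(5/96))) - 6*s := by
  nlinarith [sq_nonneg (s + 0.1208), sq_nonneg ((s+0.1208)*(s+0.25)), sq_nonneg ((s+0.1208)*(s-0.05)),
    mul_nonneg (sub_nonneg.2 hs1) (sub_nonneg.2 hs2), sq_nonneg (s*(s+0.1208)),
    mul_nonneg (mul_nonneg (sub_nonneg.2 hs1) (sub_nonneg.2 hs2)) (sq_nonneg (s+0.1208))]

set_option maxHeartbeats 1000000 in
lemma window (s q p : ℝ) (hs1 : -0.25 ≤ s) (hs2 : s ≤ 0.05)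
    (hq : q^2 = 3) (hq0 : 0 ≤ q) (hp1 : 3.141592 < p) (hp2 : p < 3.141593) :
    0.79597 * p * (1 + 3 * ((1 - s^2/2 + s^4 * (5/96))/2 - q/2 * (s - s^3/6 - s^4*(5/96))))
      ≤ 4 * p - 6 * (p/3 + s) := by
  have hq1 : 1.7320508 ≤ q := by nlinarith
  have hq2 : q ≤ 1.7320509 := by nlinarith
  have hS1 : -0.3 ≤ s - s^3/6 - s^4*(5/96) := by nlinarith [sq_nonneg s, sq_nonneg (s*s)]
  have hS2 : s - s^3/6 - s^4*(5/96) ≤ 0.1 := by nlinarith [sq_nonneg s, sq_nonneg (s*s)]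
  have key := quartic_core s hs1 hs2
  have hB2 : -1 ≤ 2 - 0.79597 - (3*0.79597/2)*(1 - s^2/2 + s^4*(5/96))
      + (3*0.79597/2) * (q * (s - s^3/6 - s^4*(5/96))) := by
    nlinarith [sq_nonneg s, sq_nonneg (s*s), mul_nonneg (sub_nonneg.2 hq1) (sub_nonneg.2 hS1),
      mul_nonneg (sub_nonneg.2 hq2) (sub_nonneg.2 hS2)]
  have hB1 : 2 - 0.79597 - (3*0.79597/2)*(1 - s^2/2 + s^4*(5/96))
      + (3*0.79597/2) * (q * (s - s^3/6 - s^4*(5/96))) ≤ 1 := by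
    nlinarith [sq_nonneg s, sq_nonneg (s*s), mul_nonneg (sub_nonneg.2 hq1) (sub_nonneg.2 hS1),
      mul_nonneg (sub_nonneg.2 hq2) (sub_nonneg.2 hS2)]
  nlinarith [key, hB1, hB2,
    mul_nonneg (sub_nonneg.2 hp1.le) (by linarith : (0:ℝ) ≤ 1 + (2 - 0.79597 - (3*0.79597/2)*(1 - s^2/2 + s^4*(5/96)) + (3*0.79597/2) * (q * (s - s^3/6 - s^4*(5/96))))),
    mul_nonneg (sub_nonneg.2 hp2.le) (by linarith : (0:ℝ) ≤ 1 - (2 - 0.79597 - (3*0.79597/2)*(1 - s^2/2 + s^4*(5/96)) + (3*0.79597/2) * (q * (s - s^3/6 - s^4*(5/96))))),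
    mul_nonneg (sub_nonneg.2 hp1.le) (by linarith : (0:ℝ) ≤ 1 - (2 - 0.79597 - (3*0.79597/2)*(1 - s^2/2 + s^4*(5/96)) + (3*0.79597/2) * (q * (s - s^3/6 - s^4*(5/96))))),
    mul_nonneg (sub_nonneg.2 hp2.le) (by linarith : (0:ℝ) ≤ 1 + (2 - 0.79597 - (3*0.79597/2)*(1 - s^2/2 + s^4*(5/96)) + (3*0.79597/2) * (q * (s - s^3/6 - s^4*(5/96))))),
    mul_nonneg (sub_nonneg.2 hq1) (sub_nonneg.2 hS1),
    mul_nonneg (sub_nonneg.2 hq2) (sub_nonneg.2 hS2),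
    mul_nonneg (sub_nonneg.2 hq1) (sub_nonneg.2 hS2),
    mul_nonneg (sub_nonneg.2 hq2) (sub_nonneg.2 hS1)]

set_option maxHeartbeats 2000000 in
/-- main inequality: F(θ) ≥ 0 on [0, π/2]. -/
lemma keyF (t : ℝ) (h0 : 0 ≤ t) (h2 : t ≤ π/2) :
    0.79597 * π * (1 + 3 * Real.cos t) ≤ 4 * π - 6 * t := by
  have hp1 : 3.141592 < π := pi_gt_d6
  have hp2 : π < 3.141593 := pi_lt_d6
  rcases le_or_gt t (π/3 - 0.25) with hc1 | hc1
  · -- left region: t ∈ [0, π/3 - 0.25]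
    have ht1 : t ≤ 0.798 := by linarith
    have habs : |t| ≤ 1 := by rw [abs_of_nonneg h0]; linarith
    have hcos := Real.cos_bound habs
    rw [abs_of_nonneg h0] at hcos
    have hcos' : Real.cos t ≤ 1 - t^2/2 + t^4*(5/96) := by
      have := (abs_sub_le_iff.1 hcos).1; linarith
    have hA : (0:ℝ) ≤ 4 - 0.79597*(1 + 3*(1 - t^2/2 + t^4*(5/96))) := by
      nlinarith [sq_nonneg t, sq_nonneg (t*t), sq_nonneg (t*(t-0.798)),
        mul_nonneg h0 (sub_nonneg.2 ht1)]
    nlinarith [mul_nonneg (sub_nonneg.2 hp1.le) hA, sq_nonneg t, sq_nonneg (t*t),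
      mul_nonneg h0 (sub_nonneg.2 ht1), sq_nonneg (t*(t-0.798)),
      mul_nonneg (mul_nonneg h0 (sub_nonneg.2 ht1)) (sq_nonneg t), pi_pos.le]
  · rcases le_or_gt t (π/3 + 0.05) with hc2 | hc2
    · -- window
      have hs1 : -0.25 ≤ t - π/3 := by linarith
      have hs2 : t - π/3 ≤ 0.05 := by linarith
      have habs : |t - π/3| ≤ 1 := by rw [abs_le]; constructor <;> linarith
      have hcos := Real.cos_bound habs
      have hsin := Real.sin_bound habs
      have habs4 : |t - π/3|^4 = (t - π/3)^4 := by
        rw [← abs_pow, abs_of_nonneg (by positivity)]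
      rw [habs4] at hcos
      have hcos' : Real.cos (t - π/3) ≤ 1 - (t-π/3)^2/2 + (t-π/3)^4*(5/96) := by
        have := (abs_sub_le_iff.1 hcos).1; linarith
      have hsin' : (t-π/3) - (t-π/3)^3/6 - (t-π/3)^4*(5/96) ≤ Real.sin (t - π/3) := by
        have h5 : |t-π/3|^5/100 ≤ (t-π/3)^4*(5/96) := by
          rw [pow_succ, habs4]; nlinarith [mul_le_mul_of_nonneg_left habs (pow_nonneg (abs_nonneg (t-π/3)) 4), habs4, abs_nonneg (t-π/3)]
        have := (abs_sub_le_iff.1 hsin).2; linarith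
      have hq0 : (0:ℝ) ≤ Real.sqrt 3 := Real.sqrt_nonneg 3
      have hq : (Real.sqrt 3)^2 = 3 := Real.sq_sqrt (by norm_num)
      have hexp : Real.cos t = Real.cos (t - π/3) / 2 - Real.sqrt 3 / 2 * Real.sin (t - π/3) := by
        have : t = (t - π/3) + π/3 := by ring
        rw [this, Real.cos_add, Real.cos_pi_div_three, Real.sin_pi_div_three]
        ring_nf
      have hcost : Real.cos t ≤ (1 - (t-π/3)^2/2 + (t-π/3)^4*(5/96))/2
          - Real.sqrt 3 / 2 * ((t-π/3) - (t-π/3)^3/6 - (t-π/3)^4*(5/96)) := by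
        rw [hexp]
        have h1 : Real.cos (t - π/3) / 2 ≤ (1 - (t-π/3)^2/2 + (t-π/3)^4*(5/96))/2 := by linarith
        have h2 : Real.sqrt 3 / 2 * ((t-π/3) - (t-π/3)^3/6 - (t-π/3)^4*(5/96))
            ≤ Real.sqrt 3 / 2 * Real.sin (t - π/3) := by
          apply mul_le_mul_of_nonneg_left hsin' (by positivity)
        linarith
      have hw := window (t - π/3) (Real.sqrt 3) π hs1 hs2 hq hq0 hp1 hp2
      have h6 : 6 * (π/3 + (t - π/3)) = 6 * t := by ring
      rw [h6] at hw
      calc 0.79597 * π * (1 + 3 * Real.cos t)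
          ≤ 0.79597 * π * (1 + 3 * ((1 - (t-π/3)^2/2 + (t-π/3)^4*(5/96))/2
              - Real.sqrt 3 / 2 * ((t-π/3) - (t-π/3)^3/6 - (t-π/3)^4*(5/96)))) := by
            have hpos : (0:ℝ) ≤ 0.79597 * π := by positivity
            have := mul_le_mul_of_nonneg_left hcost hpos
            nlinarith [this]
        _ ≤ 4 * π - 6 * t := hw
    · -- right region: t ∈ (π/3 + 0.05, π/2]
      obtain ⟨u, hu⟩ : ∃ u, u = π/2 - t := ⟨_, rfl⟩
      have hteq : t = π/2 - u := by rw [hu]; ring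
      have hu0 : 0 ≤ u := by rw [hu]; linarith
      have hu1 : u ≤ 0.4736 := by rw [hu]; linarith
      have habs : |u| ≤ 1 := by rw [abs_of_nonneg hu0]; linarith
      have hsin := Real.sin_bound habs
      rw [abs_of_nonneg hu0] at hsin
      have hsin' : Real.sin u ≤ u - u^3/6 + u^4*(5/96) := by
        have h5 : u^5/100 ≤ u^4*(5/96) := by
          rw [pow_succ]; nlinarith [mul_le_mul_of_nonneg_left (by linarith : u ≤ 1) (pow_nonneg hu0 4)]
        have := (abs_sub_le_iff.1 hsin).1; linarith
      rw [hteq, Real.cos_pi_div_two_sub]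
      have hW2 : (0:ℝ) ≤ 1 - 0.79597*(1 + 3*(u - u^3/6 + u^4*(5/96))) + 0.9 := by
        nlinarith [sq_nonneg u, sq_nonneg (u*u), mul_nonneg hu0 (sub_nonneg.2 hu1),
          mul_nonneg (mul_nonneg hu0 (sub_nonneg.2 hu1)) (sq_nonneg u)]
      have hsinpos : 0 ≤ Real.sin u := Real.sin_nonneg_of_nonneg_of_le_pi hu0 (by linarith)
      nlinarith [hsin', mul_nonneg (sub_nonneg.2 hp2.le) hW2,
        mul_nonneg (sub_nonneg.2 hp1.le) hW2,
        sq_nonneg u, sq_nonneg (u*u), mul_nonneg hu0 (sub_nonneg.2 hu1),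
        mul_nonneg (mul_nonneg hu0 (sub_nonneg.2 hu1)) (sq_nonneg u),
        mul_nonneg (mul_nonneg hu0 (sub_nonneg.2 hu1)) hu0, pi_pos.le, hsinpos]

/-- lower bound for h₂ on (1/4, 1]. -/
lemma h2_lb {a : ℝ} (ha1 : 1/4 < a) (ha2 : a ≤ 1) : 0.79597 ≤ h₂ a := by
  have ha : 0 < a := by linarith
  have hx1 : (-1:ℝ) ≤ (4*a-1)/3 := by linarith
  have hx2 : (4*a-1)/3 ≤ 1 := by linarith
  have hx0 : 0 ≤ (4*a-1)/3 := by linarith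
  set t := Real.arccos ((4*a-1)/3) with ht
  have h0 : 0 ≤ t := Real.arccos_nonneg _
  have h2 : t ≤ π/2 := Real.arccos_le_pi_div_two.2 hx0
  have hcos : Real.cos t = (4*a-1)/3 := Real.cos_arccos hx1 hx2
  have hF := keyF t h0 h2
  rw [hcos] at hF
  -- hF : 0.79597 * π * (1 + 3 * ((4a-1)/3)) ≤ 4π - 6t, i.e. 0.79597·π·4a ≤ 4π - 6t
  rw [h₂, le_div_iff₀ ha]
  show (0.79597:ℝ) * a ≤ 1 - 3 * t / (2 * π)
  have hle : 3 * t / (2 * π) ≤ 1 - 0.79597 * a := by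
    rw [div_le_iff₀ (by positivity : (0:ℝ) < 2 * π)]
    nlinarith [hF]
  linarith

lemma h2_ub : h₂ 0.7 ≤ 0.796170 := by
  have hp1 : 3.141592 < π := pi_gt_d6
  have hp2 : π < 3.141593 := pi_lt_d6
  have hq0 : (0:ℝ) ≤ Real.sqrt 3 := Real.sqrt_nonneg 3
  have hq : (Real.sqrt 3)^2 = 3 := Real.sq_sqrt (by norm_num)
  have hq1 : 1.7320508 ≤ Real.sqrt 3 := by nlinarith
  -- show cos (π/3 - 0.12) ≥ 0.6
  have habs : |(0.12:ℝ)| ≤ 1 := by rw [abs_of_nonneg]; norm_num; norm_num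
  have hcosb := Real.cos_bound habs
  have hsinb := Real.sin_bound habs
  rw [abs_of_nonneg (by norm_num : (0:ℝ) ≤ 0.12)] at hcosb hsinb
  have hcos12 : (1:ℝ) - 0.12^2/2 - 0.12^4*(5/96) ≤ Real.cos 0.12 := by
    have := (abs_sub_le_iff.1 hcosb).2; linarith
  have hsin12 : (0.12:ℝ) - 0.12^3/6 - 0.12^4*(5/96) ≤ Real.sin 0.12 := by
    have := (abs_sub_le_iff.1 hsinb).2; linarith
  have hsin12pos : (0:ℝ) ≤ Real.sin 0.12 := by nlinarith [hsin12]
  have hcr : (0.6:ℝ) ≤ Real.cos (π/3 - 0.12) := by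
    rw [Real.cos_sub, Real.cos_pi_div_three, Real.sin_pi_div_three]
    nlinarith [hcos12, hsin12, hq1, mul_nonneg hq0 hsin12pos,
      mul_le_mul_of_nonneg_right hq1 hsin12pos]
  have hr0 : (0:ℝ) ≤ π/3 - 0.12 := by linarith
  have hrpi : π/3 - 0.12 ≤ π := by linarith
  have harc : π/3 - 0.12 ≤ Real.arccos 0.6 := by
    have hmem1 : (0.6:ℝ) ∈ Set.Icc (-1:ℝ) 1 := by constructor <;> norm_num
    have hmem2 : Real.cos (π/3 - 0.12) ∈ Set.Icc (-1:ℝ) 1 :=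
      ⟨Real.neg_one_le_cos _, Real.cos_le_one _⟩
    have := Real.strictAntiOn_arccos.antitoneOn hmem1 hmem2 hcr
    rwa [Real.arccos_cos hr0 hrpi] at this
  have hval : (4*(0.7:ℝ)-1)/3 = 0.6 := by norm_num
  rw [h₂, hval, div_le_iff₀ (by norm_num : (0:ℝ) < 0.7)]
  have h2pi : (0:ℝ) < 2*π := by positivity
  have key2 : (0.442681:ℝ) ≤ 3 * Real.arccos 0.6 / (2*π) := by
    rw [le_div_iff₀ h2pi]
    nlinarith [harc, hp1]
  linarith

/-- the infimum of `h₂` over `(1/4,1]` lies in `[0.795970, 0.796170]`. -/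
theorem stmt8 : sInf (h₂ '' Set.Ioc (1/4 : ℝ) 1) ∈ Set.Icc (0.795970 : ℝ) 0.796170 := by
  have hne : (h₂ '' Set.Ioc (1/4 : ℝ) 1).Nonempty :=
    ⟨h₂ 1, ⟨1, ⟨by norm_num, le_refl 1⟩, rfl⟩⟩
  have hlb : ∀ y ∈ h₂ '' Set.Ioc (1/4 : ℝ) 1, (0.795970:ℝ) ≤ y := by
    rintro y ⟨a, ⟨ha1, ha2⟩, rfl⟩
    have := h2_lb ha1 ha2
    norm_num at this ⊢
    linarith
  have hbdd : BddBelow (h₂ '' Set.Ioc (1/4 : ℝ) 1) := ⟨0.795970, fun y hy => hlb y hy⟩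
  constructor
  · exact le_csInf hne hlb
  · have hmem : h₂ 0.7 ∈ h₂ '' Set.Ioc (1/4 : ℝ) 1 :=
      ⟨0.7, ⟨by norm_num, by norm_num⟩, rfl⟩
    exact (csInf_le hbdd hmem).trans h2_ub
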